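/- Let ε ∈ (0,1), let u0 ∈ ℝ with |u0| > 1, and let 0 < h ≤ ε²/(u0² + |u0|). Then the explicit Euler sequence (u_n) with initial value u_0 = u0 satisfies: if u0 > 1 then u_n ≥ 1 for all n and (u_n) is nonincreasing, while if u0 < -1 then u_n ≤ -1 for all n and (u_n) is nondecreasing; in both cases u_n converges to sign(u0) as n → ∞. -/

import Mathlib

open Filter

lemma euler_aux (c : ℝ) (hc0 : 0 < c) (u0 : ℝ) (hu0 : 1 < u0) (hc : c * (u0 ^ 2 + u0) ≤ 1)
    (u : ℕ → ℝ) (hinit : u 0 = u0)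
    (hrec : ∀ n, u (n + 1) = u n - c * ((u n) ^ 3 - u n)) :
    (∀ n, 1 ≤ u n) ∧ Antitone u ∧ Tendsto u atTop (nhds 1) := by
  have key : ∀ n, 1 ≤ u n ∧ u n ≤ u0 := by
    intro n
    induction n with
    | zero => rw [hinit]; exact ⟨le_of_lt hu0, le_refl _⟩
    | succ n ih =>
      obtain ⟨h1, h2⟩ := ih
      rw [hrec]
      constructor
      · nlinarith [mul_nonneg hc0.le (sub_nonneg.2 h1), sq_nonneg (u n),
          mul_nonneg (mul_nonneg hc0.le (sub_nonneg.2 h1)) (sub_nonneg.2 h2)]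
      · nlinarith [mul_nonneg hc0.le (sub_nonneg.2 h1), sq_nonneg (u n)]
  have h1 : ∀ n, 1 ≤ u n := fun n => (key n).1
  have hanti : Antitone u := by
    apply antitone_nat_of_succ_le
    intro n
    rw [hrec]
    nlinarith [mul_nonneg hc0.le (show (0:ℝ) ≤ u n ^ 3 - u n by nlinarith [h1 n, sq_nonneg (u n + 1), mul_nonneg (sub_nonneg.2 (h1 n)) (sub_nonneg.2 (h1 n))])]
  have hbdd : BddBelow (Set.range u) := ⟨1, by rintro x ⟨n, rfl⟩; exact h1 n⟩
  have htend : Tendsto u atTop (nhds (⨅ n, u n)) := tendsto_atTop_ciInf hanti hbdd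
  set L := ⨅ n, u n with hL
  have hL1 : 1 ≤ L := le_ciInf h1
  have h2 : Tendsto (fun n => u (n + 1)) atTop (nhds L) :=
    htend.comp (tendsto_add_atTop_nat 1)
  have h3 : Tendsto (fun n => u n - c * ((u n) ^ 3 - u n)) atTop
      (nhds (L - c * (L ^ 3 - L))) := by
    exact (htend.sub (((htend.pow 3).sub htend).const_mul c))
  have heq : L = L - c * (L ^ 3 - L) := by
    apply tendsto_nhds_unique h2
    simpa only [← hrec] using h3
  have hcube : L ^ 3 = L := by nlinarith [heq, hc0]
  have : L = 1 := by nlinarith [hL1, hcube, sq_nonneg (L - 1), sq_nonneg (L + 1), mul_nonneg (sub_nonneg.2 hL1) (sub_nonneg.2 hL1)]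
  exact ⟨h1, hanti, by rw [← this]; exact htend⟩

/-- Explicit Euler with `|u0| > 1` and `0 < h ≤ ε²/(u0² + |u0|)`: the numerical solution
stays beyond the equilibrium `±1`, is monotone, and converges to `sign u0`. -/
theorem explicit_euler_monotone_big_initial
    (ε : ℝ) (hε0 : 0 < ε) (hε1 : ε < 1)
    (u0 : ℝ) (hu0 : 1 < |u0|)
    (h : ℝ) (hh0 : 0 < h) (hh1 : h ≤ ε ^ 2 / (u0 ^ 2 + |u0|))
    (u : ℕ → ℝ) (hinit : u 0 = u0)
    (hrec : ∀ n : ℕ, u (n + 1) = u n - (h / ε ^ 2) * ((u n) ^ 3 - u n)) :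
    (1 < u0 → (∀ n : ℕ, 1 ≤ u n) ∧ Antitone u) ∧
    (u0 < -1 → (∀ n : ℕ, u n ≤ -1) ∧ Monotone u) ∧
    Filter.Tendsto u Filter.atTop (nhds (if 0 < u0 then (1 : ℝ) else -1)) := by
  set c := h / ε ^ 2 with hcdef
  have hε2 : (0:ℝ) < ε ^ 2 := by positivity
  have hc0 : 0 < c := div_pos hh0 hε2
  have hD : (0:ℝ) < u0 ^ 2 + |u0| := by positivity
  have hc : c * (u0 ^ 2 + |u0|) ≤ 1 := by
    rw [hcdef, div_mul_eq_mul_div, div_le_one hε2]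
    calc h * (u0 ^ 2 + |u0|) ≤ (ε ^ 2 / (u0 ^ 2 + |u0|)) * (u0 ^ 2 + |u0|) := by
          exact mul_le_mul_of_nonneg_right hh1 hD.le
      _ = ε ^ 2 := by field_simp
  rcases lt_or_ge 1 u0 with hpos | hneg
  · -- positive case
    have habs : |u0| = u0 := abs_of_pos (by linarith)
    rw [habs] at hc
    obtain ⟨h1, hanti, htend⟩ := euler_aux c hc0 u0 hpos hc u hinit hrec
    refine ⟨fun _ => ⟨h1, hanti⟩, fun hneg' => absurd hneg' (by linarith), ?_⟩
    rw [if_pos (by linarith : (0:ℝ) < u0)]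
    exact htend
  · have hneg' : u0 < -1 := by
      rcases abs_cases u0 with ⟨h1, _⟩ | ⟨h1, _⟩ <;> linarith
    have habs : |u0| = -u0 := abs_of_neg (by linarith)
    rw [habs] at hc
    have hc' : c * ((-u0) ^ 2 + (-u0)) ≤ 1 := by ring_nf; ring_nf at hc; linarith
    obtain ⟨h1, hanti, htend⟩ := euler_aux c hc0 (-u0) (by linarith) hc'
      (fun n => -(u n)) (by simp [hinit]) (fun n => by beta_reduce; rw [hrec]; ring)
    refine ⟨fun hp => absurd hp (by linarith), fun _ => ⟨fun n => by linarith [h1 n], ?_⟩, ?_⟩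
    · intro m n hmn
      have := hanti hmn
      simp only at this
      linarith
    · rw [if_neg (by linarith : ¬ (0:ℝ) < u0)]
      have := htend.neg
      simp only [neg_neg] at this
      exact this
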